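/- arXiv:1708.02671 — 4 statements merged into one kernel-verified Lean document; each statement's English description precedes it below -/
import Mathlib

section
/- Let g : ℂ → ℂ be a function, let u be a complex number with |u| = 1, and let X = (x₀, x₁, x₂, ...) be an infinite strictly increasing arithmetic progression of real numbers with x₀ = 0. Suppose (φ₀, φ₁, φ₂, ...) is a sequence of complex numbers such that for every n, φₙ is a fixed point of the map s ↦ g(s)·exp(xₙ·u·s), i.e. φₙ = g(φₙ)·exp(xₙ·u·φₙ). If the sequence (φₙ) converges to a complex number λ, g is continuous at λ, and Re(λ)·Re(u) − Im(λ)·Im(u) > 0, then g(λ) = 0. -/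
/-- If `g : ℂ → ℂ`, `u` is a unit-modulus complex number,
`X = (x n)` is a strictly increasing arithmetic progression of reals with `x 0 = 0`
(so `x n = n * d` for a positive common difference `d`), `(φ n)` is a sequence with
`φ n = g (φ n) * exp (x n * u * φ n)` for all `n`, `(φ n)` converges to `l`,
`g` is continuous at `l`, and `Re l * Re u - Im l * Im u > 0`, then `g l = 0`. -/
theorem stmt_0 (g : ℂ → ℂ) (u : ℂ) (hu : ‖u‖ = 1)
    (d : ℝ) (hd : 0 < d) (x : ℕ → ℝ) (hx : ∀ n, x n = n * d)
    (φ : ℕ → ℂ)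
    (hφ : ∀ n, φ n = g (φ n) * Complex.exp ((x n : ℂ) * u * φ n))
    (l : ℂ) (hlim : Filter.Tendsto φ Filter.atTop (nhds l))
    (hg : ContinuousAt g l)
    (hre : l.re * u.re - l.im * u.im > 0) :
    g l = 0 := by
  have h1 : Filter.Tendsto (fun n => g (φ n)) Filter.atTop (nhds (g l)) :=
    hg.tendsto.comp hlim
  set c : ℝ := (u * l).re with hc
  have hcpos : 0 < c := by
    simp [hc, Complex.mul_re]
    linarith
  -- Re (u * φ n) tends to c
  have hreφ : Filter.Tendsto (fun n => (u * φ n).re) Filter.atTop (nhds c) := by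
    exact (Complex.continuous_re.tendsto _).comp ((continuous_const.mul continuous_id).tendsto l |>.comp hlim)
  have hev : ∀ᶠ n in Filter.atTop, c / 2 ≤ (u * φ n).re := by
    have := hreφ (Ioi_mem_nhds (show c / 2 < c by linarith))
    filter_upwards [this] with n hn
    exact le_of_lt hn
  have heq : ∀ n, g (φ n) = φ n * Complex.exp (-((x n : ℂ) * u * φ n)) := by
    intro n
    rw [Complex.exp_neg]
    field_simp
    rw [mul_comm, mul_comm (Complex.exp _)]
    rw [show φ n * ↑(x n) * u = ↑(x n) * u * φ n by ring]
    exact (hφ n).symm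
  -- norm estimate
  have hnorm : ∀ n, ‖g (φ n)‖ = ‖φ n‖ * Real.exp (-(x n * (u * φ n).re)) := by
    intro n
    rw [heq n, norm_mul, Complex.norm_exp]
    congr 1
    simp [Complex.neg_re, Complex.mul_re, Complex.ofReal_re, Complex.ofReal_im]
    ring
  have hbot : Filter.Tendsto (fun n => -(x n * (u * φ n).re)) Filter.atTop Filter.atBot := by
    apply Filter.tendsto_atBot_mono' _ _
      (show Filter.Tendsto (fun n : ℕ => -((n : ℝ) * d * (c / 2))) Filter.atTop Filter.atBot by
        apply Filter.tendsto_neg_atBot_iff.mpr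
        exact Filter.Tendsto.atTop_mul_const (by linarith)
          (Filter.Tendsto.atTop_mul_const hd tendsto_natCast_atTop_atTop))
    filter_upwards [hev] with n hn
    rw [hx n]
    have hx0 : (0:ℝ) ≤ (n : ℝ) * d := by positivity
    have : (n : ℝ) * d * (c / 2) ≤ (n : ℝ) * d * (u * φ n).re :=
      mul_le_mul_of_nonneg_left hn hx0
    linarith
  have hexp : Filter.Tendsto (fun n => Real.exp (-(x n * (u * φ n).re))) Filter.atTop (nhds 0) :=
    Real.tendsto_exp_atBot.comp hbot
  have hnl : Filter.Tendsto (fun n => ‖φ n‖) Filter.atTop (nhds ‖l‖) :=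
    (continuous_norm.tendsto l).comp hlim
  have h2 : Filter.Tendsto (fun n => ‖g (φ n)‖) Filter.atTop (nhds 0) := by
    have := hnl.mul hexp
    rw [mul_zero] at this
    exact this.congr (fun n => (hnorm n).symm)
  have h3 : Filter.Tendsto (fun n => g (φ n)) Filter.atTop (nhds 0) :=
    tendsto_zero_iff_norm_tendsto_zero.mpr h2
  exact tendsto_nhds_unique h1 h3
end

section
/- Let g : ℂ → ℂ be a function, let u be a complex number with |u| = 1, and let (xₙ) be a sequence of real numbers tending to +∞. Suppose (φₙ) is a sequence of complex numbers with φₙ = g(φₙ)·exp(xₙ·u·φₙ) for every n. If (φₙ) converges to a complex number λ, g is continuous at λ, and Re(u·λ) > 0, then g(λ) = 0. -/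
/-- If `g : ℂ → ℂ`, `u` has modulus one, `(x n)` is a real sequence
tending to `+∞`, `(φ n)` satisfies `φ n = g (φ n) * exp (x n * u * φ n)` for all `n`,
`(φ n)` converges to `l`, `g` is continuous at `l`, and `Re (u * l) > 0`,
then `g l = 0`. -/
theorem stmt_1 (g : ℂ → ℂ) (u : ℂ) (hu : ‖u‖ = 1)
    (x : ℕ → ℝ) (hx : Filter.Tendsto x Filter.atTop Filter.atTop)
    (φ : ℕ → ℂ)
    (hφ : ∀ n, φ n = g (φ n) * Complex.exp ((x n : ℂ) * u * φ n))
    (l : ℂ) (hlim : Filter.Tendsto φ Filter.atTop (nhds l))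
    (hg : ContinuousAt g l)
    (hre : (u * l).re > 0) :
    g l = 0 := by
  -- abs (g (φ n)) = abs (φ n) * exp (-(x n * (u * φ n).re))
  have key : ∀ n, ‖g (φ n)‖
      = ‖φ n‖ * Real.exp (-(x n * (u * φ n).re)) := by
    intro n
    have h := congrArg (‖·‖) (hφ n)
    rw [norm_mul, Complex.norm_exp] at h
    have hre' : ((x n : ℂ) * u * φ n).re = x n * (u * φ n).re := by
      rw [mul_assoc]
      simp [Complex.mul_re]
    rw [hre'] at h
    rw [h, mul_assoc, ← Real.exp_add]
    simp
  -- x n * (u * φ n).re → ∞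
  have h1 : Filter.Tendsto (fun n => (u * φ n).re) Filter.atTop (nhds ((u * l).re)) :=
    (Complex.continuous_re.continuousAt.tendsto.comp
      ((continuous_mul_left u).continuousAt.tendsto.comp hlim))
  have h2 : Filter.Tendsto (fun n => x n * (u * φ n).re) Filter.atTop Filter.atTop :=
    Filter.Tendsto.atTop_mul_pos hre hx h1
  have h3 : Filter.Tendsto (fun n => Real.exp (-(x n * (u * φ n).re)))
      Filter.atTop (nhds 0) := by
    have := Real.tendsto_exp_atBot.comp (Filter.tendsto_neg_atBot_iff.mpr h2)
    exact this
  have h4 : Filter.Tendsto (fun n => ‖φ n‖) Filter.atTop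
      (nhds ‖l‖) := (continuous_norm.continuousAt.tendsto.comp hlim)
  have h5 : Filter.Tendsto (fun n => ‖g (φ n)‖) Filter.atTop (nhds 0) := by
    have := h4.mul h3
    rw [mul_zero] at this
    exact this.congr (fun n => (key n).symm)
  have h6 : Filter.Tendsto (fun n => ‖g (φ n)‖) Filter.atTop
      (nhds ‖g l‖) :=
    continuous_norm.continuousAt.tendsto.comp (hg.tendsto.comp hlim)
  have := tendsto_nhds_unique h6 h5
  exact norm_eq_zero.mp this
end

section
/- Let ζ denote the Riemann zeta function, let u be a complex number with |u| = 1, and let X = (x₀, x₁, x₂, ...) be an infinite strictly increasing arithmetic progression of real numbers with x₀ = 0. Suppose (φₙ) is a sequence of complex numbers such that for every n, φₙ = ζ(φₙ)·exp(xₙ·u·φₙ). If (φₙ) converges to a complex number λ with λ ≠ 1 and Re(λ)·Re(u) − Im(λ)·Im(u) > 0, then ζ(λ) = 0. -/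
open Filter Complex

/-- Let `ζ` be the Riemann zeta function, `u` a unit-modulus complex
number, and `(x n)` a strictly increasing arithmetic progression of reals with
`x 0 = 0` (so `x n = n * d`, `d > 0`). If `(φ n)` satisfies
`φ n = ζ (φ n) * exp (x n * u * φ n)` for all `n` and converges to `l ≠ 1` with
`Re l * Re u - Im l * Im u > 0`, then `ζ l = 0`. -/
theorem stmt_2 (u : ℂ) (hu : ‖u‖ = 1)
    (d : ℝ) (hd : 0 < d) (x : ℕ → ℝ) (hx : ∀ n, x n = n * d)
    (φ : ℕ → ℂ)
    (hφ : ∀ n, φ n = riemannZeta (φ n) * Complex.exp ((x n : ℂ) * u * φ n))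
    (l : ℂ) (hlim : Filter.Tendsto φ Filter.atTop (nhds l))
    (hl : l ≠ 1)
    (hre : l.re * u.re - l.im * u.im > 0) :
    riemannZeta l = 0 := by
  -- ζ is continuous at l
  have hζcont : Tendsto (fun n => riemannZeta (φ n)) atTop (nhds (riemannZeta l)) :=
    ((differentiableAt_riemannZeta hl).continuousAt.tendsto).comp hlim
  have habs : Tendsto (fun n => ‖riemannZeta (φ n)‖) atTop
      (nhds ‖riemannZeta l‖) :=
    (continuous_norm.tendsto _).comp hζcont
  -- the real part Re(u * φ n) tends to a positive limit
  have hre' : Tendsto (fun n => (u * φ n).re) atTop (nhds ((u * l).re)) :=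
    (Complex.continuous_re.tendsto _).comp ((continuous_const.mul continuous_id).tendsto l |>.comp hlim)
  have hpos : 0 < (u * l).re := by
    simp [Complex.mul_re]
    nlinarith [hre]
  -- x n → ∞
  have hxtop : Tendsto x atTop atTop := by
    have : Tendsto (fun n : ℕ => (n : ℝ) * d) atTop atTop :=
      Tendsto.atTop_mul_const hd tendsto_natCast_atTop_atTop
    exact this.congr (fun n => (hx n).symm)
  -- x n * Re(u φ n) → ∞
  have hprod : Tendsto (fun n => x n * (u * φ n).re) atTop atTop :=
    Filter.Tendsto.atTop_mul_pos hpos hxtop hre'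
  -- exp (-(x n * Re(u φ n))) → 0
  have hexp : Tendsto (fun n => Real.exp (-(x n * (u * φ n).re))) atTop (nhds 0) :=
    Real.tendsto_exp_atBot.comp (tendsto_neg_atTop_atBot.comp hprod)
  -- |φ n| → |l|
  have hφabs : Tendsto (fun n => ‖φ n‖) atTop (nhds ‖l‖) :=
    (continuous_norm.tendsto _).comp hlim
  -- |ζ (φ n)| = |φ n| * exp (-(x n * Re(u φ n)))
  have hkey : ∀ n, ‖riemannZeta (φ n)‖
      = ‖φ n‖ * Real.exp (-(x n * (u * φ n).re)) := by
    intro n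
    have h := congrArg (fun z : ℂ => ‖z‖) (hφ n)
    rw [norm_mul, Complex.norm_exp] at h
    have hre2 : ((x n : ℂ) * u * φ n).re = x n * (u * φ n).re := by
      rw [mul_assoc]
      simp [Complex.mul_re, Complex.ofReal_re, Complex.ofReal_im]
    rw [hre2] at h
    rw [h]
    rw [mul_assoc, ← Real.exp_add]
    simp
  have h0 : Tendsto (fun n => ‖riemannZeta (φ n)‖) atTop (nhds 0) := by
    have := hφabs.mul hexp
    rw [mul_zero] at this
    exact this.congr (fun n => (hkey n).symm)
  have := tendsto_nhds_unique habs h0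
  exact norm_eq_zero.mp this
end

section
/- Let ζ denote the Riemann zeta function and let X = (x₀, x₁, x₂, ...) be an infinite strictly increasing arithmetic progression of real numbers with x₀ = 0. Suppose (φₙ) is a sequence of complex numbers such that for every n, φₙ = ζ(φₙ)·exp(xₙ·φₙ). If (φₙ) converges to a complex number λ with λ ≠ 1 and Re(λ) > 0, then λ is a nontrivial zero of ζ lying in the critical strip: ζ(λ) = 0 and 0 < Re(λ) < 1. -/
open Filter Complex

/-- Let `ζ` be the Riemann zeta function and `(x n)` a strictly
increasing arithmetic progression of reals with `x 0 = 0` (so `x n = n * d`,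
`d > 0`). If `(φ n)` satisfies `φ n = ζ (φ n) * exp (x n * φ n)` for all `n`
and converges to `l ≠ 1` with `Re l > 0`, then `l` is a nontrivial zero of `ζ`
in the critical strip: `ζ l = 0` and `0 < Re l < 1`. -/
theorem stmt_5 (d : ℝ) (hd : 0 < d) (x : ℕ → ℝ) (hx : ∀ n, x n = n * d)
    (φ : ℕ → ℂ)
    (hφ : ∀ n, φ n = riemannZeta (φ n) * Complex.exp ((x n : ℂ) * φ n))
    (l : ℂ) (hlim : Filter.Tendsto φ Filter.atTop (nhds l))
    (hl : l ≠ 1) (hre : 0 < l.re) :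
    riemannZeta l = 0 ∧ 0 < l.re ∧ l.re < 1 := by
  -- x n → atTop
  have hxtop : Tendsto x atTop atTop := by
    have : Tendsto (fun n : ℕ => (n : ℝ) * d) atTop atTop :=
      (tendsto_natCast_atTop_atTop).atTop_mul_const hd
    simpa [funext hx] using this
  -- Re (φ n) → Re l
  have hretend : Tendsto (fun n => (φ n).re) atTop (nhds l.re) :=
    (Complex.continuous_re.continuousAt.tendsto).comp hlim
  -- x n * Re (φ n) → atTop
  have hprod : Tendsto (fun n => x n * (φ n).re) atTop atTop :=
    Filter.Tendsto.atTop_mul_pos hre hxtop hretend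
  -- exp (-(x n * φ n)) → 0
  have hexp0 : Tendsto (fun n => Complex.exp (-((x n : ℂ) * φ n))) atTop (nhds 0) := by
    rw [tendsto_zero_iff_norm_tendsto_zero]
    have : (fun n => ‖Complex.exp (-((x n : ℂ) * φ n))‖)
        = fun n => Real.exp (-(x n * (φ n).re)) := by
      funext n
      rw [Complex.norm_exp]
      congr 1
      simp [Complex.mul_re]
    rw [this]
    exact Real.tendsto_exp_atBot.comp (tendsto_neg_atBot_iff.mpr hprod)
  -- ζ (φ n) = φ n * exp (-(x n * φ n))
  have hzeta_eq : ∀ n, riemannZeta (φ n) = φ n * Complex.exp (-((x n : ℂ) * φ n)) := by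
    intro n
    rw [Complex.exp_neg, eq_comm, mul_inv_eq_iff_eq_mul₀ (Complex.exp_ne_zero _)]
    exact hφ n
  -- ζ (φ n) → 0
  have hz0 : Tendsto (fun n => riemannZeta (φ n)) atTop (nhds 0) := by
    have : Tendsto (fun n => φ n * Complex.exp (-((x n : ℂ) * φ n))) atTop (nhds (l * 0)) :=
      hlim.mul hexp0
    rw [mul_zero] at this
    simpa [funext hzeta_eq] using this
  -- ζ continuous at l
  have hzl : Tendsto (fun n => riemannZeta (φ n)) atTop (nhds (riemannZeta l)) :=
    ((differentiableAt_riemannZeta hl).continuousAt.tendsto).comp hlim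
  have hzero : riemannZeta l = 0 := tendsto_nhds_unique hzl hz0
  refine ⟨hzero, hre, ?_⟩
  by_contra h
  exact riemannZeta_ne_zero_of_one_le_re (le_of_not_gt h) hzero
end
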